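/- Strong law of large numbers for finite ergodic Markov chains (used in the proofs of the LLN lemmas): (1/n) ∑_{k=1}^n a(X_k) converges almost surely, as n → ∞, to a* = ∑_i π*_i a(i), regardless of the initial distribution of the chain. -/

import Mathlib

open MeasureTheory Finset Matrix

namespace SLLNAux
variable {m : ℕ}

lemma pow_entry_nonneg {P : Matrix (Fin m) (Fin m) ℝ} (hPnn : ∀ i j, 0 ≤ P i j) :
    ∀ (t : ℕ) i j, 0 ≤ (P ^ t) i j := by
  intro t
  induction t with
  | zero => intro i j; rw [pow_zero, Matrix.one_apply]; positivity
  | succ t ih =>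
    intro i j
    rw [pow_succ, Matrix.mul_apply]
    exact Finset.sum_nonneg fun l _ => mul_nonneg (ih i l) (hPnn l j)

lemma pow_row_sum {P : Matrix (Fin m) (Fin m) ℝ} (hProw : ∀ i, ∑ j, P i j = 1) :
    ∀ (t : ℕ) i, ∑ j, (P ^ t) i j = 1 := by
  intro t
  induction t with
  | zero => intro i; simp [Matrix.one_apply]
  | succ t ih =>
    intro i
    simp only [pow_succ, Matrix.mul_apply]
    rw [Finset.sum_comm]
    calc ∑ l, ∑ j, (P ^ t) i l * P l j = ∑ l, (P ^ t) i l * ∑ j, P l j := by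
          simp_rw [Finset.mul_sum]
      _ = 1 := by simp_rw [hProw]; simpa using ih i

lemma pow_stat {P : Matrix (Fin m) (Fin m) ℝ} {π : Fin m → ℝ}
    (hπstat : ∀ j, ∑ i, π i * P i j = π j) :
    ∀ (t : ℕ) j, ∑ i, π i * (P ^ t) i j = π j := by
  intro t
  induction t with
  | zero => intro j; simp [Matrix.one_apply]
  | succ t ih =>
    intro j
    simp only [pow_succ, Matrix.mul_apply, Finset.mul_sum]
    rw [Finset.sum_comm]
    calc ∑ l, ∑ i, π i * ((P ^ t) i l * P l j)
        = ∑ l, (∑ i, π i * (P ^ t) i l) * P l j := by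
          congr 1; ext l; rw [Finset.sum_mul]; congr 1; ext i; ring
      _ = π j := by simp_rw [ih]; exact hπstat j



lemma univ_ne (hm : 1 ≤ m) : (Finset.univ : Finset (Fin m)).Nonempty :=
  ⟨⟨0, hm⟩, Finset.mem_univ _⟩

/-- oscillation of a vector -/
noncomputable def osc (hm : 1 ≤ m) (h : Fin m → ℝ) : ℝ :=
  (Finset.univ.sup' (univ_ne hm) h) - (Finset.univ.inf' (univ_ne hm) h)

lemma osc_nonneg (hm : 1 ≤ m) (h : Fin m → ℝ) : 0 ≤ osc hm h := by
  obtain ⟨i, hi⟩ := univ_ne hm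
  have h1 := Finset.inf'_le h hi
  have h2 := Finset.le_sup' h hi
  unfold osc; linarith

lemma sub_le_osc (hm : 1 ≤ m) (h : Fin m → ℝ) (i j : Fin m) : h i - h j ≤ osc hm h := by
  have h1 := Finset.inf'_le h (Finset.mem_univ j)
  have h2 := Finset.le_sup' h (Finset.mem_univ i)
  unfold osc; linarith

lemma abs_le_osc (hm : 1 ≤ m) {π : Fin m → ℝ} (hπpos : ∀ i, 0 < π i)
    {h : Fin m → ℝ} (hc : ∑ i, π i * h i = 0) (i : Fin m) :
    |h i| ≤ osc hm h := by
  have hexneg : ∃ j, h j ≤ 0 := by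
    by_contra hcon; push_neg at hcon
    have : 0 < ∑ i, π i * h i :=
      Finset.sum_pos (fun i _ => mul_pos (hπpos i) (hcon i)) (univ_ne hm)
    linarith
  have hexpos : ∃ j, 0 ≤ h j := by
    by_contra hcon; push_neg at hcon
    have : ∑ i, π i * h i < 0 :=
      Finset.sum_neg (fun i _ => mul_neg_of_pos_of_neg (hπpos i) (hcon i)) (univ_ne hm)
    linarith
  obtain ⟨j, hj⟩ := hexneg
  obtain ⟨j', hj'⟩ := hexpos
  rw [abs_le]
  constructor
  · have := sub_le_osc hm h j' i; linarith
  · have := sub_le_osc hm h i j; linarith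

/-- key contraction lemma -/
lemma osc_mulVec_le (hm : 1 ≤ m) {Q : Matrix (Fin m) (Fin m) ℝ} {δ : ℝ} (hδ : 0 ≤ δ)
    (hQ : ∀ i j, δ ≤ Q i j) (hQrow : ∀ i, ∑ j, Q i j = 1) (h : Fin m → ℝ) :
    osc hm (Q.mulVec h) ≤ (1 - m * δ) * osc hm h := by
  have key : ∀ i i', Q.mulVec h i - Q.mulVec h i' ≤ (1 - m * δ) * osc hm h := by
    intro i i'
    set M := Finset.univ.sup' (univ_ne hm) h with hM
    set L := Finset.univ.inf' (univ_ne hm) h with hL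
    have hcoef : ∀ i₀, ∑ j, (Q i₀ j - δ) = 1 - m * δ := by
      intro i₀
      rw [Finset.sum_sub_distrib, hQrow i₀]
      simp [Finset.card_univ, mul_comm]
    have h1 : Q.mulVec h i ≤ (1 - m * δ) * M + δ * ∑ j, h j := by
      have : Q.mulVec h i = ∑ j, (Q i j - δ) * h j + δ * ∑ j, h j := by
        simp [Matrix.mulVec, dotProduct, Finset.mul_sum, sub_mul, Finset.sum_sub_distrib]
      rw [this]
      have : ∑ j, (Q i j - δ) * h j ≤ ∑ j, (Q i j - δ) * M :=
        Finset.sum_le_sum fun j _ => mul_le_mul_of_nonneg_left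
          (Finset.le_sup' h (Finset.mem_univ j)) (by linarith [hQ i j])
      rw [← Finset.sum_mul, hcoef i] at this
      linarith
    have h2 : (1 - m * δ) * L + δ * ∑ j, h j ≤ Q.mulVec h i' := by
      have e : Q.mulVec h i' = ∑ j, (Q i' j - δ) * h j + δ * ∑ j, h j := by
        simp [Matrix.mulVec, dotProduct, Finset.mul_sum, sub_mul, Finset.sum_sub_distrib]
      rw [e]
      have : ∑ j, (Q i' j - δ) * L ≤ ∑ j, (Q i' j - δ) * h j :=
        Finset.sum_le_sum fun j _ => mul_le_mul_of_nonneg_left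
          (Finset.inf'_le h (Finset.mem_univ j)) (by linarith [hQ i' j])
      rw [← Finset.sum_mul, hcoef i'] at this
      linarith
    calc Q.mulVec h i - Q.mulVec h i' ≤ (1 - m*δ) * M - (1 - m*δ)*L := by linarith
      _ = (1 - m * δ) * osc hm h := by unfold osc; ring
  obtain ⟨i, -, hi⟩ := Finset.exists_mem_eq_sup' (univ_ne hm) (Q.mulVec h)
  obtain ⟨i', -, hi'⟩ := Finset.exists_mem_eq_inf' (univ_ne hm) (Q.mulVec h)
  have e : osc hm (Q.mulVec h) = Q.mulVec h i - Q.mulVec h i' := by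
    unfold osc; rw [hi, hi']
  rw [e]; exact key i i'



lemma exists_delta (hm : 1 ≤ m) {P : Matrix (Fin m) (Fin m) ℝ}
    (hPprim : ∃ k : ℕ, ∀ i j, 0 < (P ^ k) i j) :
    ∃ (k₀ : ℕ) (δ : ℝ), 0 < δ ∧ ∀ i j, δ ≤ (P ^ k₀) i j := by
  obtain ⟨k, hk⟩ := hPprim
  have ne : (Finset.univ : Finset (Fin m × Fin m)).Nonempty :=
    ⟨(⟨0, hm⟩, ⟨0, hm⟩), Finset.mem_univ _⟩
  refine ⟨k, Finset.univ.inf' ne (fun p => (P ^ k) p.1 p.2), ?_, ?_⟩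
  · obtain ⟨p, -, hp⟩ := Finset.exists_mem_eq_inf' ne (fun p => (P ^ k) p.1 p.2)
    rw [hp]; exact hk p.1 p.2
  · intro i j; exact Finset.inf'_le _ (Finset.mem_univ (i, j))

lemma sum_osc_le (hm : 1 ≤ m) {P : Matrix (Fin m) (Fin m) ℝ}
    (hPnn : ∀ i j, 0 ≤ P i j) (hProw : ∀ i, ∑ j, P i j = 1)
    {k₀ : ℕ} {δ : ℝ} (hδ : 0 < δ) (hk₀ : ∀ i j, δ ≤ (P ^ k₀) i j) (g : Fin m → ℝ) :
    ∃ K : ℝ, 0 ≤ K ∧ ∀ N, ∑ t ∈ Finset.range N, osc hm ((P ^ t).mulVec g) ≤ K := by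
  set o : ℕ → ℝ := fun t => osc hm ((P ^ t).mulVec g) with ho
  have honn : ∀ t, 0 ≤ o t := fun t => osc_nonneg hm _
  have hmδ : (m : ℝ) * δ ≤ 1 := by
    have := pow_row_sum hProw k₀ ⟨0, hm⟩
    have hle : ∑ j, δ ≤ ∑ j, (P ^ k₀) ⟨0, hm⟩ j :=
      Finset.sum_le_sum fun j _ => hk₀ _ j
    simp only [Finset.sum_const, Finset.card_univ, Fintype.card_fin, nsmul_eq_mul] at hle
    linarith
  have hmδpos : 0 < (m : ℝ) * δ := by
    have : (0:ℝ) < m := by exact_mod_cast hm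
    positivity
  set θ : ℝ := 1 - m * δ with hθ
  have hθ0 : 0 ≤ θ := by linarith
  have hθ1 : θ < 1 := by simp [hθ]; linarith
  -- decay: o (k₀ + t) ≤ θ * o t
  have hdecay : ∀ t, o (k₀ + t) ≤ θ * o t := by
    intro t
    have e : (P ^ (k₀ + t)).mulVec g = (P ^ k₀).mulVec ((P ^ t).mulVec g) := by
      rw [Matrix.mulVec_mulVec, ← pow_add]
    simp only [ho, e]
    exact osc_mulVec_le hm (le_of_lt hδ) hk₀ (pow_row_sum hProw k₀) _
  -- bound: o t ≤ D
  set D : ℝ := osc hm g with hD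
  have hDnn : 0 ≤ D := osc_nonneg hm g
  have hoD : ∀ t, o t ≤ D := by
    intro t
    have := osc_mulVec_le hm (le_refl (0:ℝ)) (fun i j => pow_entry_nonneg hPnn t i j)
      (pow_row_sum hProw t) g
    simpa using this
  refine ⟨k₀ * D / (m * δ), by positivity, ?_⟩
  intro N
  have key : ∑ t ∈ Finset.range N, o t ≤ k₀ * D + θ * ∑ t ∈ Finset.range N, o t := by
    have h1 : ∑ t ∈ Finset.range N, o t ≤ ∑ t ∈ Finset.range (k₀ + N), o t := by
      apply Finset.sum_le_sum_of_subset_of_nonneg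
      · exact Finset.range_subset_range.mpr (by omega)
      · intro t _ _; exact honn t
    rw [Finset.sum_range_add] at h1
    have h2 : ∑ x ∈ Finset.range k₀, o x ≤ k₀ * D :=
      le_trans (Finset.sum_le_sum fun t _ => hoD t) (by simp [Finset.sum_const])
    have h3 : ∑ x ∈ Finset.range N, o (k₀ + x) ≤ θ * ∑ t ∈ Finset.range N, o t := by
      rw [Finset.mul_sum]
      exact Finset.sum_le_sum fun t _ => hdecay t
    linarith
  have : (m * δ) * ∑ t ∈ Finset.range N, o t ≤ k₀ * D := by
    have : (1 - θ) * ∑ t ∈ Finset.range N, o t ≤ k₀ * D := by linarith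
    calc (m*δ) * ∑ t ∈ Finset.range N, o t = (1-θ) * ∑ t ∈ Finset.range N, o t := by
          rw [hθ]; ring
      _ ≤ k₀ * D := this
  rw [div_eq_mul_inv]
  calc ∑ t ∈ Finset.range N, o t = (m*δ)⁻¹ * ((m*δ) * ∑ t ∈ Finset.range N, o t) := by
        field_simp
    _ ≤ (m*δ)⁻¹ * (k₀ * D) :=
        mul_le_mul_of_nonneg_left this (by positivity)
    _ = k₀ * D * (m*δ)⁻¹ := by ring

end SLLNAux


namespace SLLNAux

variable {Ω : Type*} [MeasurableSpace Ω] (Pr : Measure Ω) [IsProbabilityMeasure Pr]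
variable {m : ℕ} (X : ℕ → Ω → Fin m)

/-- cylinder event -/
def cyl (k : ℕ) (f : ℕ → Fin m) : Set Ω := ⋂ j ∈ Set.Icc 1 k, {ω | X j ω = f j}

variable {X}

lemma cyl_mble (hXmeas : ∀ k, Measurable (X k)) (k : ℕ) (f : ℕ → Fin m) :
    MeasurableSet (cyl X k f) := by
  apply MeasurableSet.biInter (Set.to_countable _)
  intro j _
  exact hXmeas j (MeasurableSet.singleton (f j))

lemma cyl_congr {k : ℕ} {f f' : ℕ → Fin m} (h : ∀ j ∈ Set.Icc 1 k, f j = f' j) :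
    cyl X k f = cyl X k f' := by
  unfold cyl
  apply Set.iInter₂_congr
  intro j hj
  rw [h j hj]

lemma cyl_succ (k : ℕ) (f : ℕ → Fin m) :
    cyl X (k + 1) f = cyl X k f ∩ {ω | X (k + 1) ω = f (k + 1)} := by
  unfold cyl
  ext ω
  simp only [Set.mem_iInter, Set.mem_inter_iff, Set.mem_setOf_eq, Set.mem_Icc]
  constructor
  · intro h
    exact ⟨fun j hj => h j ⟨hj.1, by omega⟩, h (k+1) ⟨by omega, le_refl _⟩⟩
  · rintro ⟨h1, h2⟩ j hj
    rcases Nat.lt_or_ge j (k+1) with hl | hl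
    · exact h1 j ⟨hj.1, by omega⟩
    · have : j = k + 1 := by omega
      rw [this]; exact h2

lemma cyl_subset_eq {k : ℕ} (hk : 1 ≤ k) (f : ℕ → Fin m) :
    cyl X k f ⊆ {ω | X k ω = f k} := by
  intro ω hω
  have := Set.mem_iInter₂.mp hω k (Set.mem_Icc.mpr ⟨hk, le_refl _⟩)
  exact this

end SLLNAux

namespace SLLNAux

variable {Ω : Type*} [MeasurableSpace Ω] {Pr : Measure Ω} [IsProbabilityMeasure Pr]
variable {m : ℕ} {X : ℕ → Ω → Fin m} {P : Matrix (Fin m) (Fin m) ℝ}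

lemma markov_step
    (hXmarkov : ∀ k : ℕ, 1 ≤ k → ∀ f : ℕ → Fin m,
      Pr (⋂ j ∈ Set.Icc 1 (k + 1), {ω | X j ω = f j})
        = Pr (⋂ j ∈ Set.Icc 1 k, {ω | X j ω = f j}) * ENNReal.ofReal (P (f k) (f (k + 1))))
    {k : ℕ} (hk : 1 ≤ k) (f : ℕ → Fin m) (l : Fin m) :
    Pr (cyl X k f ∩ {ω | X (k + 1) ω = l})
      = Pr (cyl X k f) * ENNReal.ofReal (P (f k) l) := by
  set f' : ℕ → Fin m := Function.update f (k + 1) l with hf'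
  have h1 : cyl X k f' = cyl X k f :=
    cyl_congr (fun j hj => by
      rw [hf']
      have hne : j ≠ k + 1 := by
        have h2 := (Set.mem_Icc.mp hj).2
        omega
      exact Function.update_of_ne hne _ _)
  have h2 : f' k = f k := Function.update_of_ne (by omega) _ _
  have h3 : f' (k + 1) = l := Function.update_self _ _ _
  have := hXmarkov k hk f'
  rw [show (⋂ j ∈ Set.Icc 1 (k+1), {ω | X j ω = f' j}) = cyl X (k+1) f' from rfl,
    show (⋂ j ∈ Set.Icc 1 k, {ω | X j ω = f' j}) = cyl X k f' from rfl] at this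
  rw [cyl_succ, h1, h2, h3] at this
  exact this

lemma markov_iter
    (hPnn : ∀ i j, 0 ≤ P i j)
    (hXmeas : ∀ k, Measurable (X k))
    (hXmarkov : ∀ k : ℕ, 1 ≤ k → ∀ f : ℕ → Fin m,
      Pr (⋂ j ∈ Set.Icc 1 (k + 1), {ω | X j ω = f j})
        = Pr (⋂ j ∈ Set.Icc 1 k, {ω | X j ω = f j}) * ENNReal.ofReal (P (f k) (f (k + 1)))) :
    ∀ (t k : ℕ), 1 ≤ k → ∀ (f : ℕ → Fin m) (j : Fin m),
      Pr (cyl X k f ∩ {ω | X (k + t) ω = j})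
        = Pr (cyl X k f) * ENNReal.ofReal ((P ^ t) (f k) j) := by
  intro t
  induction t with
  | zero =>
    intro k hk f j
    rcases eq_or_ne (f k) j with he | hne
    · have : cyl X k f ∩ {ω | X (k + 0) ω = j} = cyl X k f := by
        apply Set.inter_eq_self_of_subset_left
        intro ω hω
        have := cyl_subset_eq hk f hω
        simp only [Set.mem_setOf_eq] at this ⊢
        rw [Nat.add_zero, this, he]
      rw [this, pow_zero, Matrix.one_apply, if_pos he]
      simp
    · have : cyl X k f ∩ {ω | X (k + 0) ω = j} = ∅ := by
        apply Set.eq_empty_of_forall_notMem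
        rintro ω ⟨h1, h2⟩
        have := cyl_subset_eq hk f h1
        simp only [Set.mem_setOf_eq] at this h2
        rw [Nat.add_zero] at h2
        exact hne (this ▸ h2)
      rw [this, pow_zero, Matrix.one_apply, if_neg hne]
      simp
  | succ t ih =>
    intro k hk f j
    have harr : k + (t + 1) = (k + 1) + t := by omega
    have hupd : ∀ l : Fin m, cyl X k (Function.update f (k+1) l) = cyl X k f := by
      intro l
      apply cyl_congr
      intro j hj
      have hne : j ≠ k + 1 := by
        have := (Set.mem_Icc.mp hj).2; omega
      exact Function.update_of_ne hne _ _
    have hdec : cyl X k f ∩ {ω | X (k + (t+1)) ω = j}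
        = ⋃ l : Fin m, (cyl X (k+1) (Function.update f (k+1) l) ∩ {ω | X ((k+1) + t) ω = j}) := by
      rw [← harr]
      ext ω
      simp only [Set.mem_inter_iff, Set.mem_iUnion, Set.mem_setOf_eq]
      constructor
      · rintro ⟨h1, h2⟩
        refine ⟨X (k+1) ω, ?_, h2⟩
        rw [cyl_succ, hupd]
        exact ⟨h1, by simp [Function.update_self]⟩
      · rintro ⟨l, h1, h2⟩
        rw [cyl_succ, hupd] at h1
        exact ⟨h1.1, h2⟩
    have hdisj : Pairwise (Function.onFun Disjoint
        (fun l : Fin m => cyl X (k+1) (Function.update f (k+1) l) ∩ {ω | X ((k+1) + t) ω = j})) := by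
      intro l l' hll'
      simp only [Function.onFun]
      apply Set.disjoint_left.mpr
      rintro ω ⟨h1, -⟩ ⟨h2, -⟩
      rw [cyl_succ] at h1 h2
      have e1 := h1.2; have e2 := h2.2
      simp only [Set.mem_setOf_eq, Function.update_self] at e1 e2
      exact hll' (e1 ▸ e2 ▸ rfl)
    have hmble : ∀ l : Fin m, MeasurableSet
        (cyl X (k+1) (Function.update f (k+1) l) ∩ {ω | X ((k+1) + t) ω = j}) := fun l =>
      ((cyl_mble hXmeas _ _).inter (hXmeas _ (MeasurableSet.singleton j)))
    rw [hdec, measure_iUnion hdisj hmble]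
    have hterm : ∀ l : Fin m,
        Pr (cyl X (k+1) (Function.update f (k+1) l) ∩ {ω | X ((k+1) + t) ω = j})
        = Pr (cyl X k f) * (ENNReal.ofReal (P (f k) l) * ENNReal.ofReal ((P ^ t) l j)) := by
      intro l
      rw [ih (k+1) (by omega) _ j, Function.update_self]
      rw [cyl_succ, hupd,
        show Function.update f (k+1) l (k+1) = l from Function.update_self _ _ _]
      rw [markov_step hXmarkov hk f l, mul_assoc]
    rw [tsum_fintype]
    simp_rw [hterm]
    rw [← Finset.mul_sum]
    congr 1
    have hofr : ∀ l : Fin m, ENNReal.ofReal (P (f k) l) * ENNReal.ofReal ((P ^ t) l j)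
        = ENNReal.ofReal (P (f k) l * (P ^ t) l j) := fun l =>
      (ENNReal.ofReal_mul (hPnn (f k) l)).symm
    simp_rw [hofr]
    rw [← ENNReal.ofReal_sum_of_nonneg (fun l _ =>
      mul_nonneg (hPnn (f k) l) (pow_entry_nonneg hPnn t l j))]
    congr 1
    rw [pow_succ', Matrix.mul_apply]

end SLLNAux

namespace SLLNAux
variable {Ω : Type*} [MeasurableSpace Ω] {Pr : Measure Ω} [IsProbabilityMeasure Pr]
variable {m : ℕ} {X : ℕ → Ω → Fin m} {P : Matrix (Fin m) (Fin m) ℝ}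

/-- extension of a finite path to ℕ -/
def ext (d : Fin m) (k : ℕ) (g : Fin k → Fin m) : ℕ → Fin m :=
  fun j => if h : j - 1 < k ∧ 1 ≤ j then g ⟨j - 1, h.1⟩ else d

lemma mem_cyl_ext {d : Fin m} {k : ℕ} (hk : 1 ≤ k) {g : Fin k → Fin m} {ω : Ω} :
    ω ∈ cyl X k (ext d k g) ↔ ∀ r : Fin k, X (r + 1) ω = g r := by
  unfold cyl
  simp only [Set.mem_iInter, Set.mem_setOf_eq, Set.mem_Icc]
  constructor
  · intro h r
    have hr : (r : ℕ) + 1 - 1 < k ∧ 1 ≤ (r : ℕ) + 1 := by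
      constructor
      · simpa using r.2
      · omega
    have := h (r + 1) ⟨by omega, by have := r.2; omega⟩
    rw [this]
    unfold ext
    rw [dif_pos hr]
    congr 1
  · intro h j hj
    have hj1 : j - 1 < k ∧ 1 ≤ j := ⟨by omega, hj.1⟩
    unfold ext
    rw [dif_pos hj1]
    have := h ⟨j - 1, hj1.1⟩
    simpa [Nat.sub_add_cancel hj.1] using this

lemma partition_sum (hXmeas : ∀ k, Measurable (X k)) (d : Fin m)
    {k : ℕ} (hk : 1 ≤ k) (i : Fin m) {A : Set Ω} (hA : MeasurableSet A) :
    Pr ({ω | X k ω = i} ∩ A)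
      = ∑ g ∈ Finset.univ.filter (fun g : Fin k → Fin m => g ⟨k - 1, by omega⟩ = i),
          Pr (cyl X k (ext d k g) ∩ A) := by
  classical
  have hcover : {ω | X k ω = i} ∩ A
      = ⋃ g ∈ Finset.univ.filter (fun g : Fin k → Fin m => g ⟨k - 1, by omega⟩ = i),
          (cyl X k (ext d k g) ∩ A) := by
    ext ω
    simp only [Set.mem_inter_iff, Set.mem_setOf_eq, Set.mem_iUnion, Finset.mem_filter,
      Finset.mem_univ, true_and]
    constructor
    · rintro ⟨h1, h2⟩
      refine ⟨fun r => X (r + 1) ω, ?_, ?_, h2⟩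
      · show X ((k - 1 : ℕ) + 1) ω = i
        rw [show (k - 1) + 1 = k by omega]
        exact h1
      · exact (mem_cyl_ext hk).mpr (fun r => rfl)
    · rintro ⟨g, hg, h1, h2⟩
      refine ⟨?_, h2⟩
      have := (mem_cyl_ext hk).mp h1 ⟨k - 1, by omega⟩
      rw [show (k - 1) + 1 = k by omega] at this
      rw [this, hg]
  rw [hcover]
  rw [measure_biUnion_finset ?_ ?_]
  · intro g hg g' hg' hne
    apply Set.disjoint_left.mpr
    rintro ω ⟨h1, -⟩ ⟨h2, -⟩
    apply hne
    funext r
    rw [← (mem_cyl_ext hk).mp h1 r, ← (mem_cyl_ext hk).mp h2 r]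
  · intro g _
    exact (cyl_mble hXmeas _ _).inter hA

lemma pair_prob (hPnn : ∀ i j, 0 ≤ P i j)
    (hXmeas : ∀ k, Measurable (X k))
    (hXmarkov : ∀ k : ℕ, 1 ≤ k → ∀ f : ℕ → Fin m,
      Pr (⋂ j ∈ Set.Icc 1 (k + 1), {ω | X j ω = f j})
        = Pr (⋂ j ∈ Set.Icc 1 k, {ω | X j ω = f j}) * ENNReal.ofReal (P (f k) (f (k + 1))))
    (hm : 1 ≤ m) {k : ℕ} (hk : 1 ≤ k) (t : ℕ) (i j : Fin m) :
    Pr ({ω | X k ω = i} ∩ {ω | X (k + t) ω = j})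
      = Pr {ω | X k ω = i} * ENNReal.ofReal ((P ^ t) i j) := by
  classical
  set d : Fin m := ⟨0, hm⟩
  have hA : MeasurableSet {ω : Ω | X (k + t) ω = j} := hXmeas _ (MeasurableSet.singleton j)
  rw [partition_sum hXmeas d hk i hA]
  have hext : ∀ g ∈ Finset.univ.filter (fun g : Fin k → Fin m => g ⟨k - 1, by omega⟩ = i),
      ext d k g k = i := by
    intro g hg
    have h1 : k - 1 < k ∧ 1 ≤ k := ⟨by omega, hk⟩
    unfold ext
    rw [dif_pos h1]
    exact (Finset.mem_filter.mp hg).2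
  have : ∀ g ∈ Finset.univ.filter (fun g : Fin k → Fin m => g ⟨k - 1, by omega⟩ = i),
      Pr (cyl X k (ext d k g) ∩ {ω | X (k + t) ω = j})
        = Pr (cyl X k (ext d k g)) * ENNReal.ofReal ((P ^ t) i j) := by
    intro g hg
    rw [markov_iter hPnn hXmeas hXmarkov t k hk _ j, hext g hg]
  rw [Finset.sum_congr rfl this, ← Finset.sum_mul]
  congr 1
  have := partition_sum (Pr := Pr) hXmeas d hk i MeasurableSet.univ
  simp only [Set.inter_univ] at this
  rw [this]

end SLLNAux


namespace SLLNAux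
variable {Ω : Type*} [MeasurableSpace Ω] {Pr : Measure Ω} [IsProbabilityMeasure Pr]
variable {m : ℕ} {X : ℕ → Ω → Fin m} {P : Matrix (Fin m) (Fin m) ℝ}

lemma hrepr (k l : ℕ) (g : Fin m → ℝ) :
    (fun ω => g (X k ω) * g (X l ω))
      = (fun ω => ∑ i, ∑ j, Set.indicator ({ω | X k ω = i} ∩ {ω | X l ω = j})
          (fun _ => g i * g j) ω) := by
  classical
  funext ω
  simp only [Set.indicator_apply, Set.mem_inter_iff, Set.mem_setOf_eq]
  rw [Finset.sum_eq_single (X k ω)]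
  · rw [Finset.sum_eq_single (X l ω)]
    · simp
    · intro j _ hj
      simp [Ne.symm hj]
    · intro h; exact absurd (Finset.mem_univ _) h
  · intro i _ hi
    apply Finset.sum_eq_zero
    intro j _
    simp [Ne.symm hi]
  · intro h; exact absurd (Finset.mem_univ _) h

lemma pair_mble (hXmeas : ∀ k, Measurable (X k)) (k l : ℕ) (i j : Fin m) :
    MeasurableSet ({ω : Ω | X k ω = i} ∩ {ω | X l ω = j}) :=
  (hXmeas k (MeasurableSet.singleton i)).inter (hXmeas l (MeasurableSet.singleton j))

lemma int_pair_integrable (hXmeas : ∀ k, Measurable (X k)) (k l : ℕ) (g : Fin m → ℝ) :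
    MeasureTheory.Integrable (fun ω => g (X k ω) * g (X l ω)) Pr := by
  rw [hrepr]
  exact MeasureTheory.integrable_finset_sum _ (fun i _ =>
    MeasureTheory.integrable_finset_sum _ (fun j _ =>
      (MeasureTheory.integrable_const _).indicator (pair_mble hXmeas k l i j)))

lemma int_pair_eq (hXmeas : ∀ k, Measurable (X k)) (k l : ℕ) (g : Fin m → ℝ) :
    ∫ ω, g (X k ω) * g (X l ω) ∂Pr
      = ∑ i, ∑ j, g i * g j * (Pr ({ω | X k ω = i} ∩ {ω | X l ω = j})).toReal := by
  rw [hrepr]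
  rw [MeasureTheory.integral_finset_sum _ (fun i _ =>
    MeasureTheory.integrable_finset_sum _ (fun j _ =>
      (MeasureTheory.integrable_const _).indicator (pair_mble hXmeas k l i j)))]
  congr 1; funext i
  rw [MeasureTheory.integral_finset_sum _ (fun j _ =>
      (MeasureTheory.integrable_const _).indicator (pair_mble hXmeas k l i j))]
  congr 1; funext j
  rw [MeasureTheory.integral_indicator_const _ (pair_mble hXmeas k l i j)]
  rw [smul_eq_mul, mul_comm]
  rfl

lemma sum_nu (hXmeas : ∀ k, Measurable (X k)) (k : ℕ) :
    ∑ i, (Pr {ω : Ω | X k ω = i}).toReal = 1 := by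
  have hcover : (⋃ i : Fin m, {ω : Ω | X k ω = i}) = Set.univ := by
    ext ω; simp
  have hdisj : Pairwise (Function.onFun Disjoint (fun i : Fin m => {ω : Ω | X k ω = i})) := by
    intro i j hij
    apply Set.disjoint_left.mpr
    rintro ω h1 h2
    simp only [Set.mem_setOf_eq] at h1 h2
    exact hij (h1 ▸ h2 ▸ rfl)
  have := measure_iUnion (μ := Pr) hdisj (fun i => hXmeas k (MeasurableSet.singleton i))
  rw [hcover, measure_univ, tsum_fintype] at this
  have h2 : (∑ i, Pr {ω : Ω | X k ω = i}).toReal = (1 : ENNReal).toReal := by rw [← this]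
  rw [ENNReal.toReal_sum (fun i _ => measure_ne_top Pr _)] at h2
  simpa using h2

lemma cov_bound
    (hPnn : ∀ i j, 0 ≤ P i j)
    (hXmeas : ∀ k, Measurable (X k))
    (hXmarkov : ∀ k : ℕ, 1 ≤ k → ∀ f : ℕ → Fin m,
      Pr (⋂ j ∈ Set.Icc 1 (k + 1), {ω | X j ω = f j})
        = Pr (⋂ j ∈ Set.Icc 1 k, {ω | X j ω = f j}) * ENNReal.ofReal (P (f k) (f (k + 1))))
    (hm : 1 ≤ m) {k : ℕ} (hk : 1 ≤ k) (t : ℕ) (g : Fin m → ℝ)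
    {D₀ : ℝ} (hD₀ : ∀ i, |g i| ≤ D₀)
    {ot : ℝ} (hot : ∀ i, |(P ^ t).mulVec g i| ≤ ot) :
    |∫ ω, g (X k ω) * g (X (k + t) ω) ∂Pr| ≤ D₀ * ot := by
  have hD₀nn : 0 ≤ D₀ := le_trans (abs_nonneg _) (hD₀ ⟨0, hm⟩)
  have hotnn : 0 ≤ ot := le_trans (abs_nonneg _) (hot ⟨0, hm⟩)
  rw [int_pair_eq hXmeas k (k + t) g]
  have hterm : ∀ i : Fin m,
      ∑ j, g i * g j * (Pr ({ω | X k ω = i} ∩ {ω | X (k + t) ω = j})).toReal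
        = (Pr {ω | X k ω = i}).toReal * (g i * (P ^ t).mulVec g i) := by
    intro i
    have : ∀ j : Fin m, g i * g j * (Pr ({ω | X k ω = i} ∩ {ω | X (k + t) ω = j})).toReal
        = (Pr {ω | X k ω = i}).toReal * (g i * ((P ^ t) i j * g j)) := by
      intro j
      rw [pair_prob hPnn hXmeas hXmarkov hm hk t i j]
      rw [ENNReal.toReal_mul, ENNReal.toReal_ofReal (pow_entry_nonneg hPnn t i j)]
      ring
    rw [Finset.sum_congr rfl (fun j _ => this j), ← Finset.mul_sum]
    congr 1
    rw [Matrix.mulVec, dotProduct, Finset.mul_sum]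
  rw [Finset.sum_congr rfl (fun i _ => hterm i)]
  calc |∑ i, (Pr {ω | X k ω = i}).toReal * (g i * (P ^ t).mulVec g i)|
      ≤ ∑ i, |(Pr {ω | X k ω = i}).toReal * (g i * (P ^ t).mulVec g i)| :=
        Finset.abs_sum_le_sum_abs _ _
    _ ≤ ∑ i, (Pr {ω | X k ω = i}).toReal * (D₀ * ot) := by
        apply Finset.sum_le_sum
        intro i _
        rw [abs_mul, abs_mul, abs_of_nonneg ENNReal.toReal_nonneg]
        apply mul_le_mul_of_nonneg_left _ ENNReal.toReal_nonneg
        exact mul_le_mul (hD₀ i) (hot i) (abs_nonneg _) hD₀nn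
    _ = D₀ * ot := by rw [← Finset.sum_mul, sum_nu hXmeas k, one_mul]

end SLLNAux


namespace SLLNAux
variable {Ω : Type*} [MeasurableSpace Ω] {Pr : Measure Ω} [IsProbabilityMeasure Pr]
variable {m : ℕ} {X : ℕ → Ω → Fin m}

lemma second_moment (hXmeas : ∀ k, Measurable (X k)) (g : Fin m → ℝ) (c : ℕ → ℝ)
    (hcnn : ∀ t, 0 ≤ c t)
    (hc : ∀ k, 1 ≤ k → ∀ t, |∫ ω, g (X k ω) * g (X (k + t) ω) ∂Pr| ≤ c t)
    (K : ℝ) (hK : ∀ N, ∑ t ∈ Finset.range N, c t ≤ K) (N : ℕ) :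
    ∫ ω, (∑ k ∈ Finset.Icc 1 N, g (X k ω))^2 ∂Pr ≤ 2 * K * N := by
  classical
  have hint : ∀ k l : ℕ, MeasureTheory.Integrable (fun ω => g (X k ω) * g (X l ω)) Pr :=
    fun k l => int_pair_integrable hXmeas k l g
  have hexp : (fun ω => (∑ k ∈ Finset.Icc 1 N, g (X k ω))^2)
      = fun ω => ∑ k ∈ Finset.Icc 1 N, ∑ l ∈ Finset.Icc 1 N, g (X k ω) * g (X l ω) := by
    funext ω
    rw [sq, Finset.sum_mul_sum]
  rw [hexp, MeasureTheory.integral_finset_sum _ (fun k _ =>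
    MeasureTheory.integrable_finset_sum _ (fun l _ => hint k l))]
  have hswap2 : ∀ k ∈ Finset.Icc 1 N, ∫ ω, ∑ l ∈ Finset.Icc 1 N, g (X k ω) * g (X l ω) ∂Pr
      = ∑ l ∈ Finset.Icc 1 N, ∫ ω, g (X k ω) * g (X l ω) ∂Pr := fun k _ =>
    MeasureTheory.integral_finset_sum _ (fun l _ => hint k l)
  rw [Finset.sum_congr rfl hswap2]
  have hswap : ∀ k l, ∫ ω, g (X k ω) * g (X l ω) ∂Pr = ∫ ω, g (X l ω) * g (X k ω) ∂Pr := by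
    intro k l
    congr 1; funext ω; ring
  have hKnn : 0 ≤ K := le_trans (by simp) (hK 0)
  have hone : ∀ k ∈ Finset.Icc 1 N,
      ∑ l ∈ Finset.Icc 1 N, ∫ ω, g (X k ω) * g (X l ω) ∂Pr ≤ 2 * K := by
    intro k hk
    rw [Finset.mem_Icc] at hk
    have hsplit : Finset.Icc 1 N = Finset.Icc 1 k ∪ Finset.Ioc k N := by
      ext l
      simp only [Finset.mem_Icc, Finset.mem_union, Finset.mem_Ioc]
      omega
    have hdisj : Disjoint (Finset.Icc 1 k) (Finset.Ioc k N) := by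
      apply Finset.disjoint_left.mpr
      intro l h1 h2
      rw [Finset.mem_Icc] at h1
      rw [Finset.mem_Ioc] at h2
      omega
    rw [hsplit, Finset.sum_union hdisj]
    have hlow : ∑ l ∈ Finset.Icc 1 k, ∫ ω, g (X k ω) * g (X l ω) ∂Pr ≤ K := by
      have hb : ∀ l ∈ Finset.Icc 1 k, ∫ ω, g (X k ω) * g (X l ω) ∂Pr ≤ c (k - l) := by
        intro l hl
        rw [Finset.mem_Icc] at hl
        rw [hswap k l]
        have he : k = l + (k - l) := by omega
        calc ∫ ω, g (X l ω) * g (X k ω) ∂Pr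
            ≤ |∫ ω, g (X l ω) * g (X k ω) ∂Pr| := le_abs_self _
          _ ≤ c (k - l) := by
              have := hc l hl.1 (k - l)
              rw [← he] at this
              exact this
      calc ∑ l ∈ Finset.Icc 1 k, ∫ ω, g (X k ω) * g (X l ω) ∂Pr
          ≤ ∑ l ∈ Finset.Icc 1 k, c (k - l) := Finset.sum_le_sum hb
        _ = ∑ t ∈ (Finset.Icc 1 k).image (fun l => k - l), c t := by
            rw [Finset.sum_image]
            intro x hx y hy hxy
            rw [Finset.mem_coe, Finset.mem_Icc] at hx hy
            simp only at hxy
            omega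
        _ ≤ ∑ t ∈ Finset.range N, c t := by
            apply Finset.sum_le_sum_of_subset_of_nonneg
            · intro t ht
              rw [Finset.mem_image] at ht
              obtain ⟨l, hl, rfl⟩ := ht
              rw [Finset.mem_Icc] at hl
              rw [Finset.mem_range]
              omega
            · intro t _ _; exact hcnn t
        _ ≤ K := hK N
    have hhigh : ∑ l ∈ Finset.Ioc k N, ∫ ω, g (X k ω) * g (X l ω) ∂Pr ≤ K := by
      have hb : ∀ l ∈ Finset.Ioc k N, ∫ ω, g (X k ω) * g (X l ω) ∂Pr ≤ c (l - k) := by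
        intro l hl
        rw [Finset.mem_Ioc] at hl
        have he : l = k + (l - k) := by omega
        calc ∫ ω, g (X k ω) * g (X l ω) ∂Pr
            ≤ |∫ ω, g (X k ω) * g (X l ω) ∂Pr| := le_abs_self _
          _ ≤ c (l - k) := by
              have := hc k hk.1 (l - k)
              rw [← he] at this
              exact this
      calc ∑ l ∈ Finset.Ioc k N, ∫ ω, g (X k ω) * g (X l ω) ∂Pr
          ≤ ∑ l ∈ Finset.Ioc k N, c (l - k) := Finset.sum_le_sum hb
        _ = ∑ t ∈ (Finset.Ioc k N).image (fun l => l - k), c t := by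
            rw [Finset.sum_image]
            intro x hx y hy hxy
            rw [Finset.mem_coe, Finset.mem_Ioc] at hx hy
            simp only at hxy
            omega
        _ ≤ ∑ t ∈ Finset.range N, c t := by
            apply Finset.sum_le_sum_of_subset_of_nonneg
            · intro t ht
              rw [Finset.mem_image] at ht
              obtain ⟨l, hl, rfl⟩ := ht
              rw [Finset.mem_Ioc] at hl
              rw [Finset.mem_range]
              omega
            · intro t _ _; exact hcnn t
        _ ≤ K := hK N
    linarith
  calc ∑ k ∈ Finset.Icc 1 N, ∑ l ∈ Finset.Icc 1 N, ∫ ω, g (X k ω) * g (X l ω) ∂Pr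
      ≤ ∑ k ∈ Finset.Icc 1 N, 2 * K := Finset.sum_le_sum hone
    _ ≤ 2 * K * N := by
        rw [Finset.sum_const, Nat.card_Icc, nsmul_eq_mul]
        have h1 : N + 1 - 1 = N := by omega
        rw [h1]
        nlinarith [hKnn]

end SLLNAux


namespace SLLNAux
open Filter Topology

lemma fill_lemma (D₀ : ℝ) (s : ℕ → ℝ)
    (hinc : ∀ M N : ℕ, M ≤ N → |s N - s M| ≤ D₀ * ((N : ℝ) - M))
    (h2 : Tendsto (fun n : ℕ => s (n^2) / ((n : ℝ)^2)) atTop (𝓝 0)) :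
    Tendsto (fun N : ℕ => s N / N) atTop (𝓝 0) := by
  have hD₀nn : 0 ≤ D₀ := by
    have h1 := hinc 0 1 (by omega)
    have h0 := abs_nonneg (s 1 - s 0)
    simp at h1
    linarith
  set b : ℕ → ℝ := fun n => |s (n^2)| / (n:ℝ)^2 + D₀ * (2*n+1) / (n:ℝ)^2 with hbdef
  have habs : Tendsto (fun n : ℕ => |s (n^2)| / (n:ℝ)^2) atTop (𝓝 0) := by
    have he : (fun n : ℕ => |s (n^2)| / (n:ℝ)^2)
        = fun n : ℕ => |s (n^2) / (n:ℝ)^2| := by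
      funext n
      rw [abs_div, abs_of_nonneg (by positivity : (0:ℝ) ≤ (n:ℝ)^2)]
    rw [he]
    exact (tendsto_zero_iff_abs_tendsto_zero _).mp h2
  have hpart2 : Tendsto (fun n : ℕ => D₀ * (2*n+1) / (n:ℝ)^2) atTop (𝓝 0) := by
    apply squeeze_zero' (g := fun n : ℕ => (3*D₀)/n)
    · filter_upwards [eventually_ge_atTop 1] with n hn
      positivity
    · filter_upwards [eventually_ge_atTop 1] with n hn
      have hn1 : (1:ℝ) ≤ n := by exact_mod_cast hn
      rw [div_le_div_iff₀ (by positivity) (by positivity)]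
      have hnn2 : (n:ℝ) ≤ (n:ℝ)^2 := by nlinarith
      nlinarith [mul_le_mul_of_nonneg_left hnn2 hD₀nn]
    · exact tendsto_const_div_atTop_nhds_zero_nat (3*D₀)
  have hbz : Tendsto b atTop (𝓝 0) := by
    have := habs.add hpart2
    simpa using this
  have hsq : Tendsto (fun N : ℕ => Nat.sqrt N) atTop atTop := by
    apply Filter.tendsto_atTop.mpr
    intro c
    filter_upwards [eventually_ge_atTop (c*c)] with N hN
    exact Nat.le_sqrt.mpr hN
  have hcomp : Tendsto (fun N : ℕ => b (Nat.sqrt N)) atTop (𝓝 0) := hbz.comp hsq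
  apply (tendsto_zero_iff_abs_tendsto_zero _).mpr
  apply squeeze_zero' (g := fun N : ℕ => b (Nat.sqrt N))
  · exact Filter.Eventually.of_forall (fun N => abs_nonneg _)
  · filter_upwards [eventually_ge_atTop 1] with N hN
    set n := Nat.sqrt N with hn
    have hn1 : 1 ≤ n := Nat.le_sqrt.mpr (by omega)
    have hnN : n^2 ≤ N := by rw [sq]; exact Nat.sqrt_le N
    have hNn : N ≤ n^2 + 2*n := by
      have := Nat.lt_succ_sqrt N
      rw [← hn] at *
      nlinarith [this]
    have hnR : (1:ℝ) ≤ (n:ℝ) := by exact_mod_cast hn1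
    have hnNR : ((n:ℝ)^2) ≤ (N:ℝ) := by
      have : ((n^2 : ℕ) : ℝ) ≤ (N:ℝ) := by exact_mod_cast hnN
      push_cast at this
      linarith
    have hNpos : (0:ℝ) < (N:ℝ) := by
      have : (1:ℝ) ≤ (N:ℝ) := by exact_mod_cast hN
      linarith
    have hn2pos : (0:ℝ) < (n:ℝ)^2 := by positivity
    have ht1 := hinc (n^2) N hnN
    have ht2 : (N:ℝ) - ((n^2 : ℕ):ℝ) ≤ 2*(n:ℝ)+1 := by
      have : ((N:ℕ):ℝ) ≤ (((n^2 + 2*n : ℕ)):ℝ) := by exact_mod_cast hNn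
      push_cast at this ⊢
      linarith
    have hnum : |s N| ≤ |s (n^2)| + D₀ * (2*(n:ℝ)+1) := by
      have htri : |s N| ≤ |s (n^2)| + |s N - s (n^2)| := by
        have := abs_add_le (s (n^2)) (s N - s (n^2))
        simpa using this
      have : |s N - s (n^2)| ≤ D₀ * (2*(n:ℝ)+1) :=
        le_trans ht1 (mul_le_mul_of_nonneg_left ht2 hD₀nn)
      linarith
    show |s N / (N:ℝ)| ≤ b n
    rw [abs_div, abs_of_nonneg (le_of_lt hNpos)]
    calc |s N| / (N:ℝ) ≤ (|s (n^2)| + D₀ * (2*(n:ℝ)+1)) / (N:ℝ) := by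
          gcongr
      _ ≤ (|s (n^2)| + D₀ * (2*(n:ℝ)+1)) / ((n:ℝ)^2) := by
          have hden : 0 ≤ |s (n^2)| + D₀ * (2*(n:ℝ)+1) := by positivity
          gcongr
      _ = b n := by
          rw [hbdef]
          push_cast
          rw [add_div]
  · exact hcomp

end SLLNAux


namespace SLLNAux
open Filter Topology MeasureTheory

lemma as_squares {Ω : Type*} [MeasurableSpace Ω] (Pr : Measure Ω) [IsProbabilityMeasure Pr]
    (F : ℕ → Ω → ℝ) (hFmeas : ∀ n, Measurable (F n))
    (hFint : ∀ n, Integrable (fun ω => (F n ω)^2) Pr)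
    (C : ℝ) (hC : 0 ≤ C) (hbound : ∀ n : ℕ, ∫ ω, (F n ω)^2 ∂Pr ≤ C / (n:ℝ)^2) :
    ∀ᵐ ω ∂Pr, Tendsto (fun n => F n ω) atTop (𝓝 0) := by
  set G : ℕ → Ω → ENNReal := fun n ω => ENNReal.ofReal ((F n ω)^2) with hG
  have hGmeas : ∀ n, Measurable (G n) := fun n =>
    ENNReal.measurable_ofReal.comp ((hFmeas n).pow_const 2)
  have hGlint : ∀ n, ∫⁻ ω, G n ω ∂Pr ≤ ENNReal.ofReal (C / (n:ℝ)^2) := by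
    intro n
    rw [← ofReal_integral_eq_lintegral_ofReal (hFint n)
      (Filter.Eventually.of_forall (fun ω => sq_nonneg _))]
    exact ENNReal.ofReal_le_ofReal (hbound n)
  have hsummable : Summable (fun n : ℕ => C / (n:ℝ)^2) := by
    have h1 : Summable (fun n : ℕ => 1 / (n:ℝ)^2) := by
      simpa using Real.summable_one_div_nat_pow.mpr (by omega : 2 ≤ 2)
    have := h1.mul_left C
    simpa [div_eq_mul_inv, one_div, mul_comm] using this
  have htop : (∑' n : ℕ, ENNReal.ofReal (C / (n:ℝ)^2)) ≠ ⊤ := by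
    rw [← ENNReal.ofReal_tsum_of_nonneg (fun n => by positivity) hsummable]
    exact ENNReal.ofReal_ne_top
  have hts : (∑' n : ℕ, ∫⁻ ω, G n ω ∂Pr) ≠ ⊤ := by
    apply ne_top_of_le_ne_top htop
    exact ENNReal.tsum_le_tsum hGlint
  have hlint : ∫⁻ ω, (∑' n, G n ω) ∂Pr ≠ ⊤ := by
    rw [lintegral_tsum (fun n => (hGmeas n).aemeasurable)]
    exact hts
  have hae := ae_lt_top (Measurable.ennreal_tsum hGmeas) hlint
  filter_upwards [hae] with ω hω
  have h0 : Tendsto (fun n => G n ω) atTop (𝓝 0) :=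
    ENNReal.tendsto_atTop_zero_of_tsum_ne_top hω.ne
  have hreal : Tendsto (fun n => (F n ω)^2) atTop (𝓝 0) := by
    have h1 := (ENNReal.tendsto_toReal (by simp : (0 : ENNReal) ≠ ⊤)).comp h0
    have he : ∀ n, (G n ω).toReal = (F n ω)^2 := fun n =>
      ENNReal.toReal_ofReal (sq_nonneg _)
    simpa [Function.comp_def, he] using h1
  apply (tendsto_zero_iff_abs_tendsto_zero _).mpr
  have h2 := hreal.sqrt
  simp only [Real.sqrt_sq_eq_abs, Real.sqrt_zero] at h2
  exact h2

end SLLNAux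


open MeasureTheory ProbabilityTheory Filter Finset Matrix Topology

/-- Strong law of large numbers for finite ergodic Markov chains:
`(1/n) ∑_{k=1}^n a(X_k) → a* = ∑_i π*_i a(i)` almost surely, regardless of the
initial distribution of the chain. -/
theorem SLLN_finite_ergodic_Markov_chain
    {Ω : Type*} [MeasurableSpace Ω] (Pr : Measure Ω) [IsProbabilityMeasure Pr]
    (m : ℕ) (hm : 1 ≤ m)
    (P : Matrix (Fin m) (Fin m) ℝ)
    (hPnn : ∀ i j, 0 ≤ P i j)
    (hProw : ∀ i, ∑ j, P i j = 1)
    (hPprim : ∃ k : ℕ, ∀ i j, 0 < (P ^ k) i j)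
    (π : Fin m → ℝ)
    (hπpos : ∀ i, 0 < π i) (hπsum : ∑ i, π i = 1)
    (hπstat : ∀ j, ∑ i, π i * P i j = π j)
    (X : ℕ → Ω → Fin m)
    (hXmeas : ∀ k, Measurable (X k))
    (hXmarkov : ∀ k : ℕ, 1 ≤ k → ∀ f : ℕ → Fin m,
      Pr (⋂ j ∈ Set.Icc 1 (k + 1), {ω | X j ω = f j})
        = Pr (⋂ j ∈ Set.Icc 1 k, {ω | X j ω = f j}) * ENNReal.ofReal (P (f k) (f (k + 1))))
    (a : Fin m → ℝ)
    (astar : ℝ) (hastar : astar = ∑ i, π i * a i) :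
    ∀ᵐ ω ∂Pr, Tendsto (fun n : ℕ => (∑ k ∈ Finset.Icc 1 n, a (X k ω)) / n)
      atTop (𝓝 astar) := by
  classical
  set g : Fin m → ℝ := fun i => a i - astar with hg
  have hgcen : ∑ i, π i * g i = 0 := by
    simp only [hg, mul_sub, Finset.sum_sub_distrib, ← Finset.sum_mul, hπsum, hastar]
    ring
  -- centering of P^t g
  have hcent : ∀ t : ℕ, ∑ i, π i * (P ^ t).mulVec g i = 0 := by
    intro t
    have e1 : ∀ i, π i * (P ^ t).mulVec g i = ∑ j, π i * (P ^ t) i j * g j := by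
      intro i
      simp [Matrix.mulVec, dotProduct, Finset.mul_sum, mul_assoc]
    rw [Finset.sum_congr rfl (fun i _ => e1 i), Finset.sum_comm]
    have e2 : ∀ j, ∑ i, π i * (P ^ t) i j * g j = π j * g j := by
      intro j
      rw [← Finset.sum_mul, SLLNAux.pow_stat hπstat t j]
    rw [Finset.sum_congr rfl (fun j _ => e2 j)]
    exact hgcen
  set o : ℕ → ℝ := fun t => SLLNAux.osc hm ((P ^ t).mulVec g) with ho
  have honn : ∀ t, 0 ≤ o t := fun t => SLLNAux.osc_nonneg hm _
  have hot : ∀ t i, |(P ^ t).mulVec g i| ≤ o t := fun t i =>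
    SLLNAux.abs_le_osc hm hπpos (hcent t) i
  set D₀ : ℝ := SLLNAux.osc hm g with hD₀
  have hD₀i : ∀ i, |g i| ≤ D₀ := fun i => SLLNAux.abs_le_osc hm hπpos hgcen i
  have hD₀nn : 0 ≤ D₀ := SLLNAux.osc_nonneg hm g
  obtain ⟨k₀, δ, hδ, hk₀⟩ := SLLNAux.exists_delta hm hPprim
  obtain ⟨K, hKnn, hK⟩ := SLLNAux.sum_osc_le hm hPnn hProw hδ hk₀ g
  -- covariance bound
  have hc : ∀ k, 1 ≤ k → ∀ t, |∫ ω, g (X k ω) * g (X (k + t) ω) ∂Pr| ≤ D₀ * o t :=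
    fun k hk t => SLLNAux.cov_bound hPnn hXmeas hXmarkov hm hk t g hD₀i (hot t)
  have hcK : ∀ N, ∑ t ∈ Finset.range N, D₀ * o t ≤ D₀ * K := by
    intro N
    rw [← Finset.mul_sum]
    exact mul_le_mul_of_nonneg_left (hK N) hD₀nn
  have hsm := SLLNAux.second_moment (Pr := Pr) hXmeas g (fun t => D₀ * o t)
    (fun t => mul_nonneg hD₀nn (honn t)) hc (D₀ * K) hcK
  -- integrability of squares of partial sums
  have hSint : ∀ N : ℕ, Integrable (fun ω => (∑ k ∈ Finset.Icc 1 N, g (X k ω))^2) Pr := by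
    intro N
    have hexp : (fun ω => (∑ k ∈ Finset.Icc 1 N, g (X k ω))^2)
        = fun ω => ∑ k ∈ Finset.Icc 1 N, ∑ l ∈ Finset.Icc 1 N, g (X k ω) * g (X l ω) := by
      funext ω; rw [sq, Finset.sum_mul_sum]
    rw [hexp]
    exact integrable_finset_sum _ (fun k _ => integrable_finset_sum _
      (fun l _ => SLLNAux.int_pair_integrable hXmeas k l g))
  -- the subsequence functions
  set F : ℕ → Ω → ℝ := fun n ω => (∑ k ∈ Finset.Icc 1 (n^2), g (X k ω)) / ((n:ℝ)^2) with hF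
  have hFmeas : ∀ n, Measurable (F n) := by
    intro n
    apply Measurable.div_const
    apply Finset.measurable_sum
    intro k _
    exact (measurable_of_countable g).comp (hXmeas k)
  have hFsq : ∀ n, (fun ω => (F n ω)^2)
      = fun ω => ((∑ k ∈ Finset.Icc 1 (n^2), g (X k ω))^2) / (((n:ℝ)^2)^2) := by
    intro n; funext ω; rw [hF, div_pow]
  have hFint : ∀ n, Integrable (fun ω => (F n ω)^2) Pr := by
    intro n
    rw [hFsq n]
    exact (hSint (n^2)).div_const _
  have hFbound : ∀ n : ℕ, ∫ ω, (F n ω)^2 ∂Pr ≤ (2 * (D₀ * K)) / (n:ℝ)^2 := by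
    intro n
    rcases Nat.eq_zero_or_pos n with rfl | hn
    · have : ∀ ω, (F 0 ω)^2 = 0 := by
        intro ω; rw [hF]; norm_num
      have h0 : (2 * (D₀ * K)) / ((0:ℕ):ℝ)^2 = 0 := by norm_num
      rw [show (fun ω => (F 0 ω)^2) = fun _ => (0:ℝ) from funext this, h0, integral_zero]
    · have hnR : (0:ℝ) < (n:ℝ) := by exact_mod_cast hn
      rw [hFsq n, integral_div]
      have h1 := hsm (n^2)
      have hcast : ((n^2 : ℕ):ℝ) = (n:ℝ)^2 := by push_cast; ring
      rw [hcast] at h1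
      rw [div_le_div_iff₀ (by positivity) (by positivity)]
      calc (∫ ω, (∑ k ∈ Finset.Icc 1 (n^2), g (X k ω))^2 ∂Pr) * (n:ℝ)^2
          ≤ (2 * (D₀ * K) * (n:ℝ)^2) * (n:ℝ)^2 := by
            apply mul_le_mul_of_nonneg_right h1 (by positivity)
        _ = 2 * (D₀ * K) * ((n:ℝ)^2)^2 := by ring
  have has := SLLNAux.as_squares Pr F hFmeas hFint (2 * (D₀ * K)) (by positivity) hFbound
  filter_upwards [has] with ω hω
  set s : ℕ → ℝ := fun N => ∑ k ∈ Finset.Icc 1 N, g (X k ω) with hs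
  have hinc : ∀ M N : ℕ, M ≤ N → |s N - s M| ≤ D₀ * ((N : ℝ) - M) := by
    intro M N hMN
    have hsplit : Finset.Icc 1 N = Finset.Icc 1 M ∪ Finset.Ioc M N := by
      ext l
      simp only [Finset.mem_Icc, Finset.mem_union, Finset.mem_Ioc]
      omega
    have hdisj : Disjoint (Finset.Icc 1 M) (Finset.Ioc M N) := by
      apply Finset.disjoint_left.mpr
      intro l h1 h2
      rw [Finset.mem_Icc] at h1
      rw [Finset.mem_Ioc] at h2
      omega
    have hdiff : s N - s M = ∑ k ∈ Finset.Ioc M N, g (X k ω) := by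
      rw [hs]
      simp only
      rw [hsplit, Finset.sum_union hdisj]
      ring
    rw [hdiff]
    calc |∑ k ∈ Finset.Ioc M N, g (X k ω)| ≤ ∑ k ∈ Finset.Ioc M N, |g (X k ω)| :=
          Finset.abs_sum_le_sum_abs _ _
      _ ≤ ∑ k ∈ Finset.Ioc M N, D₀ := Finset.sum_le_sum (fun k _ => hD₀i _)
      _ = (N - M : ℕ) * D₀ := by rw [Finset.sum_const, Nat.card_Ioc, nsmul_eq_mul]
      _ ≤ D₀ * ((N : ℝ) - M) := by
          rw [Nat.cast_sub hMN]
          ring_nf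
          exact le_refl _
  have hfill := SLLNAux.fill_lemma D₀ s hinc hω
  have hfinal : Tendsto (fun N : ℕ => s N / N + astar) atTop (𝓝 astar) := by
    have := hfill.add_const astar
    simpa using this
  apply hfinal.congr'
  filter_upwards [eventually_ge_atTop 1] with N hN
  have hsum : ∑ k ∈ Finset.Icc 1 N, a (X k ω) = s N + N * astar := by
    rw [hs]
    simp only [hg]
    rw [Finset.sum_sub_distrib, Finset.sum_const, nsmul_eq_mul, Nat.card_Icc]
    have : (N + 1 - 1 : ℕ) = N := by omega
    rw [this]
    ring
  rw [hsum]
  have hNne : (N:ℝ) ≠ 0 := by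
    have : (1:ℝ) ≤ (N:ℝ) := by exact_mod_cast hN
    linarith
  field_simp
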